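/- The Black–Scholes vega is positive: for all S > 0, K > 0 and σ > 0, the function σ ↦ C_BS(S, K, σ) is differentiable at σ with derivative S·√T·φ(d₁), where d₁ = log(S/K)/(σ√T) + σ√T/2; in particular this derivative is strictly positive. -/

import Mathlib

open Real Set Filter MeasureTheory intervalIntegral

/-- Standard normal cdf. -/
noncomputable def stdNormalCDF (x : ℝ) : ℝ :=
  ∫ t in Set.Iio x, Real.exp (-t ^ 2 / 2) / Real.sqrt (2 * Real.pi)

/-- Black–Scholes call price with maturity `T`. -/
noncomputable def C_BS (T S K σ : ℝ) : ℝ :=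
  S * stdNormalCDF (Real.log (S / K) / (σ * Real.sqrt T) + σ * Real.sqrt T / 2) -
  K * stdNormalCDF (Real.log (S / K) / (σ * Real.sqrt T) - σ * Real.sqrt T / 2)

/-- Standard normal density. -/
noncomputable def stdNormalPDF (x : ℝ) : ℝ :=
  Real.exp (-x ^ 2 / 2) / Real.sqrt (2 * Real.pi)

lemma stdNormalPDF_cont : Continuous stdNormalPDF := by
  unfold stdNormalPDF
  fun_prop

lemma stdNormalPDF_integrable : Integrable stdNormalPDF := by
  have h1 : Integrable (fun t : ℝ => Real.exp (-(1/2) * t ^ 2)) :=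
    integrable_exp_neg_mul_sq (by norm_num)
  have h2 := h1.div_const (Real.sqrt (2 * Real.pi))
  have : (fun t : ℝ => Real.exp (-(1/2) * t ^ 2) / Real.sqrt (2 * Real.pi)) = stdNormalPDF := by
    funext t
    rw [show (-(1/2) * t ^ 2 : ℝ) = -t ^ 2 / 2 by ring]
    rfl
  rwa [this] at h2

lemma stdNormalCDF_hasDerivAt (x : ℝ) : HasDerivAt stdNormalCDF (stdNormalPDF x) x := by
  have key : ∀ y : ℝ, stdNormalCDF y = stdNormalCDF 0 + ∫ t in (0:ℝ)..y, stdNormalPDF t := by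
    intro y
    have h := integral_Iic_sub_Iic (μ := volume) (f := stdNormalPDF)
      (stdNormalPDF_integrable.integrableOn) (stdNormalPDF_integrable.integrableOn)
      (a := 0) (b := y)
    have e : ∀ z : ℝ, stdNormalCDF z = ∫ t in Iic z, stdNormalPDF t := by
      intro z
      rw [integral_Iic_eq_integral_Iio]
      rfl
    rw [e y, e 0] at *
    linarith [h]
  have hderiv : HasDerivAt (fun y => stdNormalCDF 0 + ∫ t in (0:ℝ)..y, stdNormalPDF t)
      (stdNormalPDF x) x := by
    have := intervalIntegral.integral_hasDerivAt_right
      (f := stdNormalPDF) (a := 0) (b := x)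
      (stdNormalPDF_integrable.intervalIntegrable)
      (stdNormalPDF_cont.stronglyMeasurableAtFilter _ _)
      stdNormalPDF_cont.continuousAt
    simpa using this
  have : (fun y => stdNormalCDF 0 + ∫ t in (0:ℝ)..y, stdNormalPDF t) = stdNormalCDF := by
    funext y; exact (key y).symm
  rwa [this] at hderiv

lemma stdNormalPDF_pos (x : ℝ) : 0 < stdNormalPDF x :=
  div_pos (Real.exp_pos _) (Real.sqrt_pos.mpr (by positivity))

/-- The Black–Scholes vega is `S·√T·φ(d₁)`, which is strictly positive. -/
theorem C_BS_vega (T : ℝ) (hT : 0 < T) (S K σ : ℝ)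
    (hS : 0 < S) (hK : 0 < K) (hσ : 0 < σ) :
    HasDerivAt (fun s => C_BS T S K s)
      (S * Real.sqrt T *
        stdNormalPDF (Real.log (S / K) / (σ * Real.sqrt T) + σ * Real.sqrt T / 2)) σ ∧
    0 < S * Real.sqrt T *
        stdNormalPDF (Real.log (S / K) / (σ * Real.sqrt T) + σ * Real.sqrt T / 2) := by
  set r := Real.sqrt T with hrdef
  have hr : 0 < r := Real.sqrt_pos.mpr hT
  set L := Real.log (S / K) with hLdef
  have hσr : σ * r ≠ 0 := by positivity
  set d₁ := L / (σ * r) + σ * r / 2 with hd1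
  set d₂ := L / (σ * r) - σ * r / 2 with hd2
  constructor
  · -- derivatives of d₁, d₂ as functions of s
    have hinv : HasDerivAt (fun s : ℝ => L / (s * r)) (-(L * r) / (σ * r) ^ 2) σ := by
      have := (hasDerivAt_const σ L).div ((hasDerivAt_id σ).mul_const r)
        hσr
      exact this.congr_deriv (by simp only [id_eq]; ring)
    have hlin : HasDerivAt (fun s : ℝ => s * r / 2) (r / 2) σ := by
      have := ((hasDerivAt_id σ).mul_const r).div_const 2
      exact this.congr_deriv (by ring)
    have hd1' : HasDerivAt (fun s : ℝ => L / (s * r) + s * r / 2)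
        (-(L * r) / (σ * r) ^ 2 + r / 2) σ := hinv.add hlin
    have hd2' : HasDerivAt (fun s : ℝ => L / (s * r) - s * r / 2)
        (-(L * r) / (σ * r) ^ 2 - r / 2) σ := hinv.sub hlin
    have hc1 := ((stdNormalCDF_hasDerivAt d₁).comp σ hd1').const_mul S
    have hc2 := ((stdNormalCDF_hasDerivAt d₂).comp σ hd2').const_mul K
    have hmain := hc1.sub hc2
    -- identity: K * φ(d₂) = S * φ(d₁)
    have hid : K * stdNormalPDF d₂ = S * stdNormalPDF d₁ := by
      unfold stdNormalPDF
      have hsq : -d₂ ^ 2 / 2 = L + -d₁ ^ 2 / 2 := by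
        rw [hd1, hd2]
        field_simp
        ring
      rw [hsq, Real.exp_add, Real.exp_log (div_pos hS hK)]
      field_simp
    have hval : S * (stdNormalPDF d₁ * (-(L * r) / (σ * r) ^ 2 + r / 2)) -
        K * (stdNormalPDF d₂ * (-(L * r) / (σ * r) ^ 2 - r / 2)) =
        S * r * stdNormalPDF d₁ := by
      have : K * (stdNormalPDF d₂ * (-(L * r) / (σ * r) ^ 2 - r / 2)) =
          S * (stdNormalPDF d₁ * (-(L * r) / (σ * r) ^ 2 - r / 2)) := by
        rw [show K * (stdNormalPDF d₂ * (-(L * r) / (σ * r) ^ 2 - r / 2)) =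
          (K * stdNormalPDF d₂) * (-(L * r) / (σ * r) ^ 2 - r / 2) by ring, hid]
        ring
      rw [this]; ring
    rw [← hval]
    exact hmain
  · exact mul_pos (mul_pos hS hr) (stdNormalPDF_pos _)
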